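/- In a valid Septoku board f, if some symbol v occurs in exactly seven cells, then v = f(19), the value of the central cell; moreover v then occurs exactly once in each of the 28 regions (the 21 rows and the 7 circles). -/

import Mathlib

/-- Cell `n` (numbered 1 through 37) of the Septoku board, as an element of `Fin 37`. -/
def cell (n : ℕ) : Fin 37 := ⟨(n - 1) % 37, Nat.mod_lt _ (by norm_num)⟩

/-- The set of cells with the given (1-based) numbers. -/
def cells (l : List ℕ) : Finset (Fin 37) := (l.map cell).toFinset

/-- The 21 rows of the Septoku board (7 horizontal and 7 in each diagonal direction). -/
def septokuRows : List (Finset (Fin 37)) :=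
  [cells [1,2,3,4], cells [5,6,7,8,9], cells [10,11,12,13,14,15],
   cells [16,17,18,19,20,21,22], cells [23,24,25,26,27,28],
   cells [29,30,31,32,33], cells [34,35,36,37],
   cells [1,5,10,16], cells [2,6,11,17,23], cells [3,7,12,18,24,29],
   cells [4,8,13,19,25,30,34], cells [9,14,20,26,31,35],
   cells [15,21,27,32,36], cells [22,28,33,37],
   cells [4,9,15,22], cells [3,8,14,21,28], cells [2,7,13,20,27,33],
   cells [1,6,12,19,26,32,37], cells [5,11,18,25,31,36],
   cells [10,17,24,30,35], cells [16,23,29,34]]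

/-- The 7 circular regions of the Septoku board (centered at cells 6,8,17,19,21,30,32). -/
def septokuCircles : List (Finset (Fin 37)) :=
  [cells [1,2,5,6,7,11,12], cells [3,4,7,8,9,13,14],
   cells [10,11,16,17,18,23,24], cells [12,13,18,19,20,25,26],
   cells [14,15,20,21,22,27,28], cells [24,25,29,30,31,34,35],
   cells [26,27,31,32,33,36,37]]

/-- A valid Septoku board: a function from the 37 cells to the 7 symbols that is
injective on each of the 21 rows and attains all seven symbols on each circle. -/
def IsSeptoku (f : Fin 37 → Fin 7) : Prop :=
  (∀ R ∈ septokuRows, Set.InjOn f ↑R) ∧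
  (∀ C ∈ septokuCircles, ∀ v : Fin 7, ∃ x ∈ C, f x = v)


def regsN : List (List ℕ) :=
  [[1,2,3,4],
   [5,6,7,8,9],
   [10,11,12,13,14,15],
   [16,17,18,19,20,21,22],
   [23,24,25,26,27,28],
   [29,30,31,32,33],
   [34,35,36,37],
   [1,5,10,16],
   [2,6,11,17,23],
   [3,7,12,18,24,29],
   [4,8,13,19,25,30,34],
   [9,14,20,26,31,35],
   [15,21,27,32,36],
   [22,28,33,37],
   [4,9,15,22],
   [3,8,14,21,28],
   [2,7,13,20,27,33],
   [1,6,12,19,26,32,37],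
   [5,11,18,25,31,36],
   [10,17,24,30,35],
   [16,23,29,34],
   [1,2,5,6,7,11,12],
   [3,4,7,8,9,13,14],
   [10,11,16,17,18,23,24],
   [12,13,18,19,20,25,26],
   [14,15,20,21,22,27,28],
   [24,25,29,30,31,34,35],
   [26,27,31,32,33,36,37]]

def regsF : List (List (Fin 37)) := regsN.map (List.map cell)

def circsF : List (List (Fin 37)) := (regsN.drop 21).map (List.map cell)

set_option maxRecDepth 40000 in
set_option maxHeartbeats 4000000 in
set_option synthInstance.maxHeartbeats 2000000 in
set_option synthInstance.maxSize 2048 in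
theorem septoku_brute :
    ∀ a ∈ ([1,2,3,4].map cell : List (Fin 37)),
    ∀ b ∈ ([5,6,7,8,9].map cell : List (Fin 37)),
    (∀ R ∈ regsF, ¬(a ∈ R ∧ b ∈ R)) →
    ∀ c ∈ ([10,11,12,13,14,15].map cell : List (Fin 37)),
    (∀ R ∈ regsF, ¬(a ∈ R ∧ c ∈ R) ∧ ¬(b ∈ R ∧ c ∈ R)) →
    ∀ d ∈ ([16,17,18,19,20,21,22].map cell : List (Fin 37)),
    (∀ R ∈ regsF, ¬(a ∈ R ∧ d ∈ R) ∧ ¬(b ∈ R ∧ d ∈ R) ∧ ¬(c ∈ R ∧ d ∈ R)) →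
    ∀ e ∈ ([23,24,25,26,27,28].map cell : List (Fin 37)),
    (∀ R ∈ regsF, ¬(a ∈ R ∧ e ∈ R) ∧ ¬(b ∈ R ∧ e ∈ R) ∧ ¬(c ∈ R ∧ e ∈ R) ∧ ¬(d ∈ R ∧ e ∈ R)) →
    ∀ p ∈ ([29,30,31,32,33].map cell : List (Fin 37)),
    (∀ R ∈ regsF, ¬(a ∈ R ∧ p ∈ R) ∧ ¬(b ∈ R ∧ p ∈ R) ∧ ¬(c ∈ R ∧ p ∈ R) ∧ ¬(d ∈ R ∧ p ∈ R) ∧ ¬(e ∈ R ∧ p ∈ R)) →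
    ∀ q ∈ ([34,35,36,37].map cell : List (Fin 37)),
    (∀ R ∈ regsF, ¬(a ∈ R ∧ q ∈ R) ∧ ¬(b ∈ R ∧ q ∈ R) ∧ ¬(c ∈ R ∧ q ∈ R) ∧ ¬(d ∈ R ∧ q ∈ R) ∧ ¬(e ∈ R ∧ q ∈ R) ∧ ¬(p ∈ R ∧ q ∈ R)) →
    (∀ C ∈ circsF, a ∈ C ∨ b ∈ C ∨ c ∈ C ∨ d ∈ C ∨ e ∈ C ∨ p ∈ C ∨ q ∈ C) →
    d = cell 19 ∧
    ∀ R ∈ regsF,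
      ∃ x ∈ [a, b, c, d, e, p, q], x ∈ R ∧ ∀ y ∈ [a, b, c, d, e, p, q], y ∈ R → y = x := by
  decide +kernel


set_option maxHeartbeats 1600000 in
/-- If some symbol `v` occurs in exactly seven cells of a valid Septoku board `f`, then
`v` is the value of the central cell 19, and `v` occurs exactly once in each of the 28
regions (the 21 rows and the 7 circles). -/
theorem septoku_seven_times_center (f : Fin 37 → Fin 7) (hf : IsSeptoku f)
    (v : Fin 7) (hv : (Finset.univ.filter (fun x => f x = v)).card = 7) :
    v = f (cell 19) ∧
    ∀ R ∈ septokuRows ++ septokuCircles, (R.filter (fun x => f x = v)).card = 1 := by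
  have memc : ∀ (l : List ℕ) (x : Fin 37), x ∈ cells l ↔ x ∈ l.map cell := by
    intro l x; simp [cells]
  have regs_eq : septokuRows ++ septokuCircles = regsF.map List.toFinset := rfl
  have circ_eq : septokuCircles = circsF.map List.toFinset := rfl
  have hle : ∀ R ∈ septokuRows ++ septokuCircles, (R.filter (fun x => f x = v)).card ≤ 1 := by
    intro R hR
    rw [List.mem_append] at hR
    refine Finset.card_le_one.mpr ?_
    intro a ha b hb
    rw [Finset.mem_filter] at ha hb
    rcases hR with hR | hR
    · exact hf.1 R hR ha.1 hb.1 (by rw [ha.2, hb.2])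
    · have hcard : R.card = 7 := by fin_cases hR <;> decide
      have himg : R.image f = Finset.univ := by
        apply Finset.eq_univ_iff_forall.mpr
        intro w
        obtain ⟨x, hx, hfx⟩ := hf.2 R hR w
        exact Finset.mem_image.mpr ⟨x, hx, hfx⟩
      have hinj : Set.InjOn f ↑R := by
        apply Finset.card_image_iff.mp
        rw [himg, hcard]
        simp
      exact hinj ha.1 hb.1 (by rw [ha.2, hb.2])
  have e : (((cells [1,2,3,4]).filter (fun x => f x = v)) ∪ (((cells [5,6,7,8,9]).filter (fun x => f x = v)) ∪ (((cells [10,11,12,13,14,15]).filter (fun x => f x = v)) ∪ (((cells [16,17,18,19,20,21,22]).filter (fun x => f x = v)) ∪ (((cells [23,24,25,26,27,28]).filter (fun x => f x = v)) ∪ (((cells [29,30,31,32,33]).filter (fun x => f x = v)) ∪ ((cells [34,35,36,37]).filter (fun x => f x = v)))))))) = Finset.univ.filter (fun x => f x = v) := by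
    simp only [← Finset.filter_union]
    congr 1
  have hv' : ((((cells [1,2,3,4]).filter (fun x => f x = v)) ∪ (((cells [5,6,7,8,9]).filter (fun x => f x = v)) ∪ (((cells [10,11,12,13,14,15]).filter (fun x => f x = v)) ∪ (((cells [16,17,18,19,20,21,22]).filter (fun x => f x = v)) ∪ (((cells [23,24,25,26,27,28]).filter (fun x => f x = v)) ∪ (((cells [29,30,31,32,33]).filter (fun x => f x = v)) ∪ ((cells [34,35,36,37]).filter (fun x => f x = v))))))))).card = 7 := by rw [e]; exact hv
  have u1 := Finset.card_union_le ((cells [1,2,3,4]).filter (fun x => f x = v)) (((cells [5,6,7,8,9]).filter (fun x => f x = v)) ∪ (((cells [10,11,12,13,14,15]).filter (fun x => f x = v)) ∪ (((cells [16,17,18,19,20,21,22]).filter (fun x => f x = v)) ∪ (((cells [23,24,25,26,27,28]).filter (fun x => f x = v)) ∪ (((cells [29,30,31,32,33]).filter (fun x => f x = v)) ∪ ((cells [34,35,36,37]).filter (fun x => f x = v)))))))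
  have u2 := Finset.card_union_le ((cells [5,6,7,8,9]).filter (fun x => f x = v)) (((cells [10,11,12,13,14,15]).filter (fun x => f x = v)) ∪ (((cells [16,17,18,19,20,21,22]).filter (fun x => f x = v)) ∪ (((cells [23,24,25,26,27,28]).filter (fun x => f x = v)) ∪ (((cells [29,30,31,32,33]).filter (fun x => f x = v)) ∪ ((cells [34,35,36,37]).filter (fun x => f x = v))))))
  have u3 := Finset.card_union_le ((cells [10,11,12,13,14,15]).filter (fun x => f x = v)) (((cells [16,17,18,19,20,21,22]).filter (fun x => f x = v)) ∪ (((cells [23,24,25,26,27,28]).filter (fun x => f x = v)) ∪ (((cells [29,30,31,32,33]).filter (fun x => f x = v)) ∪ ((cells [34,35,36,37]).filter (fun x => f x = v)))))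
  have u4 := Finset.card_union_le ((cells [16,17,18,19,20,21,22]).filter (fun x => f x = v)) (((cells [23,24,25,26,27,28]).filter (fun x => f x = v)) ∪ (((cells [29,30,31,32,33]).filter (fun x => f x = v)) ∪ ((cells [34,35,36,37]).filter (fun x => f x = v))))
  have u5 := Finset.card_union_le ((cells [23,24,25,26,27,28]).filter (fun x => f x = v)) (((cells [29,30,31,32,33]).filter (fun x => f x = v)) ∪ ((cells [34,35,36,37]).filter (fun x => f x = v)))
  have u6 := Finset.card_union_le ((cells [29,30,31,32,33]).filter (fun x => f x = v)) ((cells [34,35,36,37]).filter (fun x => f x = v))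
  have l1 := hle (cells [1,2,3,4]) (by simp [septokuRows, septokuCircles])
  have l2 := hle (cells [5,6,7,8,9]) (by simp [septokuRows, septokuCircles])
  have l3 := hle (cells [10,11,12,13,14,15]) (by simp [septokuRows, septokuCircles])
  have l4 := hle (cells [16,17,18,19,20,21,22]) (by simp [septokuRows, septokuCircles])
  have l5 := hle (cells [23,24,25,26,27,28]) (by simp [septokuRows, septokuCircles])
  have l6 := hle (cells [29,30,31,32,33]) (by simp [septokuRows, septokuCircles])
  have l7 := hle (cells [34,35,36,37]) (by simp [septokuRows, septokuCircles])
  have hc1 : ((cells [1,2,3,4]).filter (fun x => f x = v)).card = 1 := by omega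
  have hc2 : ((cells [5,6,7,8,9]).filter (fun x => f x = v)).card = 1 := by omega
  have hc3 : ((cells [10,11,12,13,14,15]).filter (fun x => f x = v)).card = 1 := by omega
  have hc4 : ((cells [16,17,18,19,20,21,22]).filter (fun x => f x = v)).card = 1 := by omega
  have hc5 : ((cells [23,24,25,26,27,28]).filter (fun x => f x = v)).card = 1 := by omega
  have hc6 : ((cells [29,30,31,32,33]).filter (fun x => f x = v)).card = 1 := by omega
  have hc7 : ((cells [34,35,36,37]).filter (fun x => f x = v)).card = 1 := by omega
  obtain ⟨x1, hs1⟩ := Finset.card_eq_one.mp hc1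
  obtain ⟨x2, hs2⟩ := Finset.card_eq_one.mp hc2
  obtain ⟨x3, hs3⟩ := Finset.card_eq_one.mp hc3
  obtain ⟨x4, hs4⟩ := Finset.card_eq_one.mp hc4
  obtain ⟨x5, hs5⟩ := Finset.card_eq_one.mp hc5
  obtain ⟨x6, hs6⟩ := Finset.card_eq_one.mp hc6
  obtain ⟨x7, hs7⟩ := Finset.card_eq_one.mp hc7
  have hm1 : x1 ∈ ((cells [1,2,3,4]).filter (fun x => f x = v)) := by rw [hs1]; exact Finset.mem_singleton_self _
  have hm2 : x2 ∈ ((cells [5,6,7,8,9]).filter (fun x => f x = v)) := by rw [hs2]; exact Finset.mem_singleton_self _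
  have hm3 : x3 ∈ ((cells [10,11,12,13,14,15]).filter (fun x => f x = v)) := by rw [hs3]; exact Finset.mem_singleton_self _
  have hm4 : x4 ∈ ((cells [16,17,18,19,20,21,22]).filter (fun x => f x = v)) := by rw [hs4]; exact Finset.mem_singleton_self _
  have hm5 : x5 ∈ ((cells [23,24,25,26,27,28]).filter (fun x => f x = v)) := by rw [hs5]; exact Finset.mem_singleton_self _
  have hm6 : x6 ∈ ((cells [29,30,31,32,33]).filter (fun x => f x = v)) := by rw [hs6]; exact Finset.mem_singleton_self _
  have hm7 : x7 ∈ ((cells [34,35,36,37]).filter (fun x => f x = v)) := by rw [hs7]; exact Finset.mem_singleton_self _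
  have hr1 : x1 ∈ cells [1,2,3,4] := (Finset.mem_filter.mp hm1).1
  have px1 : f x1 = v := (Finset.mem_filter.mp hm1).2
  have hr2 : x2 ∈ cells [5,6,7,8,9] := (Finset.mem_filter.mp hm2).1
  have px2 : f x2 = v := (Finset.mem_filter.mp hm2).2
  have hr3 : x3 ∈ cells [10,11,12,13,14,15] := (Finset.mem_filter.mp hm3).1
  have px3 : f x3 = v := (Finset.mem_filter.mp hm3).2
  have hr4 : x4 ∈ cells [16,17,18,19,20,21,22] := (Finset.mem_filter.mp hm4).1
  have px4 : f x4 = v := (Finset.mem_filter.mp hm4).2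
  have hr5 : x5 ∈ cells [23,24,25,26,27,28] := (Finset.mem_filter.mp hm5).1
  have px5 : f x5 = v := (Finset.mem_filter.mp hm5).2
  have hr6 : x6 ∈ cells [29,30,31,32,33] := (Finset.mem_filter.mp hm6).1
  have px6 : f x6 = v := (Finset.mem_filter.mp hm6).2
  have hr7 : x7 ∈ cells [34,35,36,37] := (Finset.mem_filter.mp hm7).1
  have px7 : f x7 = v := (Finset.mem_filter.mp hm7).2
  have mm1 : x1 ∈ ([1,2,3,4].map cell : List (Fin 37)) := (memc _ _).mp hr1
  have mm2 : x2 ∈ ([5,6,7,8,9].map cell : List (Fin 37)) := (memc _ _).mp hr2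
  have mm3 : x3 ∈ ([10,11,12,13,14,15].map cell : List (Fin 37)) := (memc _ _).mp hr3
  have mm4 : x4 ∈ ([16,17,18,19,20,21,22].map cell : List (Fin 37)) := (memc _ _).mp hr4
  have mm5 : x5 ∈ ([23,24,25,26,27,28].map cell : List (Fin 37)) := (memc _ _).mp hr5
  have mm6 : x6 ∈ ([29,30,31,32,33].map cell : List (Fin 37)) := (memc _ _).mp hr6
  have mm7 : x7 ∈ ([34,35,36,37].map cell : List (Fin 37)) := (memc _ _).mp hr7
  have hS : ∀ y, f y = v → y = x1 ∨ y = x2 ∨ y = x3 ∨ y = x4 ∨ y = x5 ∨ y = x6 ∨ y = x7 := by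
    intro y hy
    have hy2 : y ∈ (((cells [1,2,3,4]).filter (fun x => f x = v)) ∪ (((cells [5,6,7,8,9]).filter (fun x => f x = v)) ∪ (((cells [10,11,12,13,14,15]).filter (fun x => f x = v)) ∪ (((cells [16,17,18,19,20,21,22]).filter (fun x => f x = v)) ∪ (((cells [23,24,25,26,27,28]).filter (fun x => f x = v)) ∪ (((cells [29,30,31,32,33]).filter (fun x => f x = v)) ∪ ((cells [34,35,36,37]).filter (fun x => f x = v)))))))) := by
      rw [e]; exact Finset.mem_filter.mpr ⟨Finset.mem_univ y, hy⟩
    rw [hs1, hs2, hs3, hs4, hs5, hs6, hs7] at hy2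
    simp only [Finset.mem_union, Finset.mem_singleton] at hy2; exact hy2
  have hnee : ∀ (A B : List ℕ), (∀ z ∈ cells A, z ∉ cells B) →
      ∀ x ∈ cells A, ∀ y ∈ cells B, x ≠ y := by
    intro A B h x hx y hy hxy
    exact h x hx (hxy ▸ hy)
  have hpairL : ∀ x y : Fin 37, f x = v → f y = v → x ≠ y →
      ∀ R ∈ regsF, ¬(x ∈ R ∧ y ∈ R) := by
    intro x y hx hy hne R hR hxy
    have hRF : R.toFinset ∈ septokuRows ++ septokuCircles := by
      rw [regs_eq]; exact List.mem_map_of_mem hR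
    exact hne (Finset.card_le_one.mp (hle R.toFinset hRF)
      x (Finset.mem_filter.mpr ⟨List.mem_toFinset.mpr hxy.1, hx⟩)
      y (Finset.mem_filter.mpr ⟨List.mem_toFinset.mpr hxy.2, hy⟩))
  have hp2 : ∀ R ∈ regsF, ¬(x1 ∈ R ∧ x2 ∈ R) :=
    fun R hR => hpairL x1 x2 px1 px2 (hnee [1,2,3,4] [5,6,7,8,9] (by decide) x1 hr1 x2 hr2) R hR
  have hp3 : ∀ R ∈ regsF, ¬(x1 ∈ R ∧ x3 ∈ R) ∧ ¬(x2 ∈ R ∧ x3 ∈ R) :=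
    fun R hR => ⟨hpairL x1 x3 px1 px3 (hnee [1,2,3,4] [10,11,12,13,14,15] (by decide) x1 hr1 x3 hr3) R hR, hpairL x2 x3 px2 px3 (hnee [5,6,7,8,9] [10,11,12,13,14,15] (by decide) x2 hr2 x3 hr3) R hR⟩
  have hp4 : ∀ R ∈ regsF, ¬(x1 ∈ R ∧ x4 ∈ R) ∧ ¬(x2 ∈ R ∧ x4 ∈ R) ∧ ¬(x3 ∈ R ∧ x4 ∈ R) :=
    fun R hR => ⟨hpairL x1 x4 px1 px4 (hnee [1,2,3,4] [16,17,18,19,20,21,22] (by decide) x1 hr1 x4 hr4) R hR, hpairL x2 x4 px2 px4 (hnee [5,6,7,8,9] [16,17,18,19,20,21,22] (by decide) x2 hr2 x4 hr4) R hR, hpairL x3 x4 px3 px4 (hnee [10,11,12,13,14,15] [16,17,18,19,20,21,22] (by decide) x3 hr3 x4 hr4) R hR⟩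
  have hp5 : ∀ R ∈ regsF, ¬(x1 ∈ R ∧ x5 ∈ R) ∧ ¬(x2 ∈ R ∧ x5 ∈ R) ∧ ¬(x3 ∈ R ∧ x5 ∈ R) ∧ ¬(x4 ∈ R ∧ x5 ∈ R) :=
    fun R hR => ⟨hpairL x1 x5 px1 px5 (hnee [1,2,3,4] [23,24,25,26,27,28] (by decide) x1 hr1 x5 hr5) R hR, hpairL x2 x5 px2 px5 (hnee [5,6,7,8,9] [23,24,25,26,27,28] (by decide) x2 hr2 x5 hr5) R hR, hpairL x3 x5 px3 px5 (hnee [10,11,12,13,14,15] [23,24,25,26,27,28] (by decide) x3 hr3 x5 hr5) R hR, hpairL x4 x5 px4 px5 (hnee [16,17,18,19,20,21,22] [23,24,25,26,27,28] (by decide) x4 hr4 x5 hr5) R hR⟩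
  have hp6 : ∀ R ∈ regsF, ¬(x1 ∈ R ∧ x6 ∈ R) ∧ ¬(x2 ∈ R ∧ x6 ∈ R) ∧ ¬(x3 ∈ R ∧ x6 ∈ R) ∧ ¬(x4 ∈ R ∧ x6 ∈ R) ∧ ¬(x5 ∈ R ∧ x6 ∈ R) :=
    fun R hR => ⟨hpairL x1 x6 px1 px6 (hnee [1,2,3,4] [29,30,31,32,33] (by decide) x1 hr1 x6 hr6) R hR, hpairL x2 x6 px2 px6 (hnee [5,6,7,8,9] [29,30,31,32,33] (by decide) x2 hr2 x6 hr6) R hR, hpairL x3 x6 px3 px6 (hnee [10,11,12,13,14,15] [29,30,31,32,33] (by decide) x3 hr3 x6 hr6) R hR, hpairL x4 x6 px4 px6 (hnee [16,17,18,19,20,21,22] [29,30,31,32,33] (by decide) x4 hr4 x6 hr6) R hR, hpairL x5 x6 px5 px6 (hnee [23,24,25,26,27,28] [29,30,31,32,33] (by decide) x5 hr5 x6 hr6) R hR⟩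
  have hp7 : ∀ R ∈ regsF, ¬(x1 ∈ R ∧ x7 ∈ R) ∧ ¬(x2 ∈ R ∧ x7 ∈ R) ∧ ¬(x3 ∈ R ∧ x7 ∈ R) ∧ ¬(x4 ∈ R ∧ x7 ∈ R) ∧ ¬(x5 ∈ R ∧ x7 ∈ R) ∧ ¬(x6 ∈ R ∧ x7 ∈ R) :=
    fun R hR => ⟨hpairL x1 x7 px1 px7 (hnee [1,2,3,4] [34,35,36,37] (by decide) x1 hr1 x7 hr7) R hR, hpairL x2 x7 px2 px7 (hnee [5,6,7,8,9] [34,35,36,37] (by decide) x2 hr2 x7 hr7) R hR, hpairL x3 x7 px3 px7 (hnee [10,11,12,13,14,15] [34,35,36,37] (by decide) x3 hr3 x7 hr7) R hR, hpairL x4 x7 px4 px7 (hnee [16,17,18,19,20,21,22] [34,35,36,37] (by decide) x4 hr4 x7 hr7) R hR, hpairL x5 x7 px5 px7 (hnee [23,24,25,26,27,28] [34,35,36,37] (by decide) x5 hr5 x7 hr7) R hR, hpairL x6 x7 px6 px7 (hnee [29,30,31,32,33] [34,35,36,37] (by decide) x6 hr6 x7 hr7) R hR⟩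
  have hcov : ∀ C ∈ circsF, x1 ∈ C ∨ x2 ∈ C ∨ x3 ∈ C ∨ x4 ∈ C ∨ x5 ∈ C ∨ x6 ∈ C ∨ x7 ∈ C := by
    intro C hC
    have hCF : C.toFinset ∈ septokuCircles := by
      rw [circ_eq]; exact List.mem_map_of_mem hC
    obtain ⟨x, hxC, hfx⟩ := hf.2 C.toFinset hCF v
    have hxC' := List.mem_toFinset.mp hxC
    rcases hS x hfx with rfl | rfl | rfl | rfl | rfl | rfl | rfl
    · exact Or.inl hxC'
    · exact Or.inr (Or.inl hxC')
    · exact Or.inr (Or.inr (Or.inl hxC'))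
    · exact Or.inr (Or.inr (Or.inr (Or.inl hxC')))
    · exact Or.inr (Or.inr (Or.inr (Or.inr (Or.inl hxC'))))
    · exact Or.inr (Or.inr (Or.inr (Or.inr (Or.inr (Or.inl hxC')))))
    · exact Or.inr (Or.inr (Or.inr (Or.inr (Or.inr (Or.inr hxC')))))
  obtain ⟨hd19, huniq⟩ := septoku_brute x1 mm1 x2 mm2 hp2 x3 mm3 hp3 x4 mm4 hp4 x5 mm5 hp5 x6 mm6 hp6 x7 mm7 hp7 hcov
  refine ⟨(hd19 ▸ px4).symm, ?_⟩
  intro R hR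
  rw [regs_eq] at hR
  obtain ⟨Rl, hRl, rfl⟩ := List.mem_map.mp hR
  obtain ⟨x, hxL, hxR, hu⟩ := huniq Rl hRl
  have pxx : f x = v := by
    simp only [List.mem_cons, List.not_mem_nil, or_false] at hxL
    rcases hxL with rfl | rfl | rfl | rfl | rfl | rfl | rfl <;> assumption
  rw [Finset.card_eq_one]
  refine ⟨x, ?_⟩
  ext y
  simp only [Finset.mem_filter, Finset.mem_singleton, List.mem_toFinset]
  constructor
  · rintro ⟨hyR, hyP⟩
    rcases hS y hyP with rfl | rfl | rfl | rfl | rfl | rfl | rfl <;> exact hu _ (by simp) hyR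
  · rintro rfl
    exact ⟨hxR, pxx⟩
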